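/- Let λ_{i,j} = 3/(π⁴ i² j²) for i,j ∈ ℤ⁺ and let λ_{(1)} ≥ λ_{(2)} ≥ ... be these values sorted in decreasing order. Then the tail sums satisfy Σ_{v>K} λ_{(v)} ≍ (log K)²/K as K → ∞, i.e., there exist constants 0 < c < C such that c·(log K)²/K ≤ Σ_{v>K} λ_{(v)} ≤ C·(log K)²/K for all sufficiently large K. -/

import Mathlib

open Finset

noncomputable def lam (p : ℕ+ × ℕ+) : ℝ := 3 / (Real.pi ^ 4 * (p.1 : ℝ) ^ 2 * (p.2 : ℝ) ^ 2)

lemma pnat_cast_pos (i : ℕ+) : (0:ℝ) < (i:ℝ) := by exact_mod_cast i.pos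

lemma lam_pos (p : ℕ+ × ℕ+) : 0 < lam p := by
  have h1 := pnat_cast_pos p.1; have h2 := pnat_cast_pos p.2
  have := Real.pi_pos
  unfold lam; positivity

lemma lam_eq (p : ℕ+ × ℕ+) :
    lam p = (3 / Real.pi ^ 4) * ((1 / (p.1:ℝ)^2) * (1 / (p.2:ℝ)^2)) := by
  have h1 := (pnat_cast_pos p.1).ne'; have h2 := (pnat_cast_pos p.2).ne'
  have := Real.pi_ne_zero
  unfold lam; field_simp

lemma lam_lt {p q : ℕ+ × ℕ+} (h : (p.1 : ℕ) * (p.2 : ℕ) < (q.1:ℕ) * (q.2:ℕ)) :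
    lam q < lam p := by
  have h1 := pnat_cast_pos p.1; have h2 := pnat_cast_pos p.2
  have h3 := pnat_cast_pos q.1; have h4 := pnat_cast_pos q.2
  have hpi := Real.pi_pos
  have hr : (p.1:ℝ) * (p.2:ℝ) < (q.1:ℝ) * (q.2:ℝ) := by exact_mod_cast h
  have key : ((p.1:ℝ)*(p.2:ℝ))^2 < ((q.1:ℝ)*(q.2:ℝ))^2 := pow_lt_pow_left₀ hr (by positivity) two_ne_zero
  unfold lam
  rw [div_lt_div_iff₀ (by positivity) (by positivity)]
  nlinarith [key, pow_pos hpi 4]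

lemma summable_sq : Summable (fun i : ℕ+ => 1 / (i:ℝ)^2) := by
  have h : Summable (fun n : ℕ => 1/(n:ℝ)^2) := by
    simpa using Real.summable_one_div_nat_pow.mpr (by norm_num : 1 < 2)
  exact h.comp_injective (fun a b hab => PNat.coe_injective hab)

lemma summable_lam : Summable lam := by
  have := (summable_sq.mul_of_nonneg summable_sq (fun i => by positivity)
    (fun j => by positivity)).mul_left (3 / Real.pi ^ 4)
  refine this.congr fun p => ?_
  rw [lam_eq]

/-- The finset of pairs with product at most `m`. -/
noncomputable def A (m : ℕ) : Finset (ℕ+ × ℕ+) :=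
  (Finset.Icc 1 m.toPNat' ×ˢ Finset.Icc 1 m.toPNat').filter
    (fun p => (p.1 : ℕ) * (p.2 : ℕ) ≤ m)

lemma mem_A {m : ℕ} (hm : 1 ≤ m) {p : ℕ+ × ℕ+} :
    p ∈ A m ↔ (p.1 : ℕ) * (p.2 : ℕ) ≤ m := by
  have hcoe : (m.toPNat' : ℕ) = m := PNat.toPNat'_coe hm
  constructor
  · intro hp
    exact (Finset.mem_filter.1 hp).2
  · intro h
    refine Finset.mem_filter.2 ⟨Finset.mem_product.2 ⟨?_, ?_⟩, h⟩
    · refine Finset.mem_Icc.2 ⟨p.1.one_le, ?_⟩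
      have : (p.1 : ℕ) ≤ m := le_trans (Nat.le_mul_of_pos_right _ p.2.pos) h
      exact_mod_cast hcoe ▸ this
    · refine Finset.mem_Icc.2 ⟨p.2.one_le, ?_⟩
      have : (p.2 : ℕ) ≤ m := le_trans (Nat.le_mul_of_pos_left _ p.1.pos) h
      exact_mod_cast hcoe ▸ this

lemma card_A {m : ℕ} (hm : 1 ≤ m) :
    (A m).card = ∑ i ∈ Finset.Icc 1 m, m / i := by
  rw [Finset.card_eq_sum_card_fiberwise
    (f := fun p : ℕ+ × ℕ+ => ((p.1 : ℕ))) (t := Finset.Icc 1 m) ?_]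
  · refine Finset.sum_congr rfl fun i hi => ?_
    obtain ⟨hi1, him⟩ := Finset.mem_Icc.1 hi
    have hi0 : 0 < i := hi1
    have hcard : (Finset.Icc 1 (m / i)).card = m / i := by
      rw [Nat.card_Icc, Nat.add_sub_cancel]
    rw [← hcard]
    refine Finset.card_bij' (fun p _ => (p.2 : ℕ))
      (fun j hj => (⟨i, hi0⟩, ⟨j, lt_of_lt_of_le Nat.zero_lt_one (Finset.mem_Icc.1 hj).1⟩))
      ?_ ?_ ?_ ?_
    · intro p hp
      obtain ⟨hpA, hp1⟩ := Finset.mem_filter.1 hp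
      have hprod := (mem_A hm).1 hpA
      refine Finset.mem_Icc.2 ⟨p.2.one_le, ?_⟩
      rw [Nat.le_div_iff_mul_le hi0]
      calc (p.2 : ℕ) * i = (p.1 : ℕ) * (p.2 : ℕ) := by rw [hp1]; ring
        _ ≤ m := hprod
    · intro j hj
      obtain ⟨hj1, hj2⟩ := Finset.mem_Icc.1 hj
      refine Finset.mem_filter.2 ⟨(mem_A hm).2 ?_, rfl⟩
      show i * j ≤ m
      calc i * j = j * i := by ring
        _ ≤ m := (Nat.le_div_iff_mul_le hi0).1 hj2
    · intro p hp
      obtain ⟨hpA, hp1⟩ := Finset.mem_filter.1 hp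
      refine Prod.ext ?_ ?_
      · exact PNat.coe_injective hp1.symm
      · rfl
    · intro j hj
      rfl
  · intro p hp
    have hprod := (mem_A hm).1 hp
    refine Finset.mem_Icc.2 ⟨p.1.one_le, ?_⟩
    exact le_trans (Nat.le_mul_of_pos_right _ p.2.pos) hprod

noncomputable def Hsum (m : ℕ) : ℝ := ∑ i ∈ Finset.Icc 1 m, (1:ℝ)/i

lemma Hsum_eq (m : ℕ) : Hsum m = (harmonic m : ℝ) := by
  rw [harmonic_eq_sum_Icc]
  push_cast
  simp [Hsum, one_div]

lemma log_le_Hsum (m : ℕ) : Real.log m ≤ Hsum m := by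
  rw [Hsum_eq]
  calc Real.log m ≤ Real.log (m + 1) := by
        rcases Nat.eq_zero_or_pos m with h | h
        · simp [h]
        · rw [Real.log_le_log_iff (by exact_mod_cast h) (by positivity)]
          push_cast; linarith
    _ ≤ (harmonic m : ℝ) := by exact_mod_cast log_add_one_le_harmonic m

lemma Hsum_le (m : ℕ) : Hsum m ≤ 1 + Real.log m := by
  rw [Hsum_eq]
  exact_mod_cast harmonic_le_one_add_log m

lemma cardA_le {m : ℕ} (hm : 1 ≤ m) : ((A m).card : ℝ) ≤ m * (1 + Real.log m) := by
  rw [card_A hm]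
  push_cast
  calc ∑ i ∈ Finset.Icc 1 m, ((m / i : ℕ) : ℝ)
      ≤ ∑ i ∈ Finset.Icc 1 m, (m : ℝ) * (1 / i) := by
        refine Finset.sum_le_sum fun i hi => ?_
        rw [mul_one_div]
        exact Nat.cast_div_le
    _ = (m : ℝ) * Hsum m := by rw [← Finset.mul_sum]; rfl
    _ ≤ (m : ℝ) * (1 + Real.log m) := by
        have := Hsum_le m
        have hm0 : (0:ℝ) ≤ m := Nat.cast_nonneg m
        nlinarith

lemma cardA_ge {m : ℕ} (hm : 1 ≤ m) : (m:ℝ) * (Real.log m - 1) ≤ ((A m).card : ℝ) := by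
  rw [card_A hm]
  push_cast
  have key : ∀ i ∈ Finset.Icc 1 m, (m : ℝ) * (1 / i) - 1 ≤ ((m / i : ℕ) : ℝ) := by
    intro i hi
    obtain ⟨hi1, him⟩ := Finset.mem_Icc.1 hi
    have hi0 : 0 < i := hi1
    have h1 : m < i * (m / i) + i := by
      have h2 := Nat.div_add_mod m i
      have h3 := Nat.mod_lt m hi0
      omega
    have h1r : (m : ℝ) < i * ((m / i : ℕ) : ℝ) + i := by exact_mod_cast h1
    have hi0r : (0:ℝ) < i := by exact_mod_cast hi0
    rw [mul_one_div, sub_le_iff_le_add, div_le_iff₀ hi0r]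
    nlinarith
  calc (m:ℝ) * (Real.log m - 1)
      ≤ (m:ℝ) * (Hsum m - 1) := by
        have := log_le_Hsum m
        have hm0 : (0:ℝ) ≤ m := Nat.cast_nonneg m
        nlinarith
    _ = ∑ i ∈ Finset.Icc 1 m, ((m : ℝ) * (1 / i) - 1) := by
        rw [Finset.sum_sub_distrib, ← Finset.mul_sum]
        simp [Hsum, Nat.card_Icc, mul_sub]
    _ ≤ ∑ i ∈ Finset.Icc 1 m, ((m / i : ℕ) : ℝ) := Finset.sum_le_sum key

/-- tail of the square series over `ℕ+`. -/
noncomputable def Tail (t : ℕ) : ℝ := ∑' j : ℕ+, (if (j:ℕ) ≤ t then 0 else 1/((j:ℝ))^2)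

lemma summable_tail (t : ℕ) :
    Summable (fun j : ℕ+ => if (j:ℕ) ≤ t then 0 else 1/((j:ℝ))^2) := by
  refine Summable.of_nonneg_of_le (fun j => by positivity) (fun j => ?_) summable_sq
  by_cases h : (j:ℕ) ≤ t <;> simp [h] <;> positivity

lemma tail_nonneg (t : ℕ) : 0 ≤ Tail t := by
  exact tsum_nonneg (fun j => by by_cases h : (j:ℕ) ≤ t <;> simp [h] <;> positivity)

/-- the corresponding function on `ℕ`. -/
noncomputable def G (t n : ℕ) : ℝ := if n + 1 ≤ t then 0 else 1/((n:ℝ)+1)^2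

lemma G_nonneg (t n : ℕ) : 0 ≤ G t n := by
  unfold G; by_cases h : n + 1 ≤ t <;> simp [h] <;> positivity

lemma G_eq (t n : ℕ) :
    (fun j : ℕ+ => if (j:ℕ) ≤ t then 0 else 1/((j:ℝ))^2) (Equiv.pnatEquivNat.symm n)
      = G t n := by
  simp only [Equiv.pnatEquivNat_symm_apply, G, Nat.succPNat]
  norm_num

lemma tail_eq_G (t : ℕ) : Tail t = ∑' n : ℕ, G t n := by
  unfold Tail
  rw [← Equiv.pnatEquivNat.symm.tsum_eq (fun j : ℕ+ => if (j:ℕ) ≤ t then 0 else 1/((j:ℝ))^2)]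
  exact tsum_congr (fun n => G_eq t n)

lemma summable_G (t : ℕ) : Summable (G t) := by
  have := (Equiv.pnatEquivNat.symm.summable_iff
    (f := fun j : ℕ+ => if (j:ℕ) ≤ t then 0 else 1/((j:ℝ))^2)).2 (summable_tail t)
  exact this.congr (G_eq t)

lemma G_partial {t : ℕ} (ht : 1 ≤ t) (n : ℕ) :
    ∑ k ∈ Finset.range n, G t k ≤ 1/(t:ℝ) - 1/((max n t : ℕ):ℝ) := by
  induction n with
  | zero => simp
  | succ n ih =>
    rw [Finset.sum_range_succ]
    by_cases h : n + 1 ≤ t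
    · have h1 : max n t = t := Nat.max_eq_right (by omega)
      have h2 : max (n+1) t = t := Nat.max_eq_right h
      rw [h2]
      have : G t n = 0 := by simp [G, h]
      rw [this, add_zero]
      rw [h1] at ih
      exact ih
    · have htn : t ≤ n := by omega
      have h1 : max n t = n := Nat.max_eq_left htn
      have h2 : max (n+1) t = n+1 := Nat.max_eq_left (by omega)
      rw [h2]
      rw [h1] at ih
      have hn1 : (1:ℝ) ≤ n := by exact_mod_cast le_trans ht htn
      have hGn : G t n = 1/((n:ℝ)+1)^2 := by simp [G, h]
      have key : 1/((n:ℝ)+1)^2 ≤ 1/(n:ℝ) - 1/((n:ℝ)+1) := by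
        rw [div_sub_div _ _ (by linarith) (by linarith)]
        rw [div_le_div_iff₀ (by positivity) (by positivity)]
        ring_nf
        nlinarith
      push_cast
      push_cast at ih
      rw [hGn]
      linarith

lemma tail_le {t : ℕ} (ht : 1 ≤ t) : Tail t ≤ 1/t := by
  rw [tail_eq_G]
  refine Real.tsum_le_of_sum_range_le (G_nonneg t) (fun n => ?_)
  refine le_trans (G_partial ht n) ?_
  have : (0:ℝ) ≤ 1/((max n t : ℕ):ℝ) := by positivity
  linarith

lemma tail_le_two (t : ℕ) : Tail t ≤ 2 := by
  rw [tail_eq_G]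
  refine Real.tsum_le_of_sum_range_le (G_nonneg t) (fun n => ?_)
  have key : ∀ n : ℕ, ∑ k ∈ Finset.range n, G t k ≤ 2 - 1/((max n 1 : ℕ):ℝ) := by
    intro n
    induction n with
    | zero => norm_num
    | succ n ih =>
      rw [Finset.sum_range_succ]
      have hG : G t n ≤ 1/((n:ℝ)+1)^2 := by
        unfold G; by_cases h : n + 1 ≤ t <;> simp [h] <;> positivity
      rcases Nat.eq_zero_or_pos n with hn0 | hn0
      · subst hn0
        simp only [Finset.range_zero, Finset.sum_empty, zero_add]
        refine le_trans hG ?_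
        norm_num
      · have h1 : max n 1 = n := Nat.max_eq_left hn0
        have h2 : max (n+1) 1 = n+1 := Nat.max_eq_left (by omega)
        rw [h2]
        rw [h1] at ih
        have hn1 : (1:ℝ) ≤ n := by exact_mod_cast hn0
        have key2 : 1/((n:ℝ)+1)^2 ≤ 1/(n:ℝ) - 1/((n:ℝ)+1) := by
          rw [div_sub_div _ _ (by linarith) (by positivity)]
          rw [div_le_div_iff₀ (by positivity) (by positivity)]
          ring_nf
          nlinarith
        push_cast
        push_cast at ih
        linarith
  refine le_trans (key n) ?_
  have : (0:ℝ) ≤ 1/((max n 1 : ℕ):ℝ) := by positivity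
  linarith

lemma tail_ge (t : ℕ) : 1/(4*((t:ℝ)+1)) ≤ Tail t := by
  rw [tail_eq_G]
  have hsub : ∑ k ∈ Finset.Icc t (2*t+1), G t k ≤ ∑' n, G t n :=
    Summable.sum_le_tsum _ (fun k _ => G_nonneg t k) (summable_G t)
  refine le_trans ?_ hsub
  have hcard : (Finset.Icc t (2*t+1)).card = t + 2 := by
    rw [Nat.card_Icc]; omega
  have hbound : ∀ k ∈ Finset.Icc t (2*t+1), 1/(2*((t:ℝ)+1))^2 ≤ G t k := by
    intro k hk
    obtain ⟨hk1, hk2⟩ := Finset.mem_Icc.1 hk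
    have h : ¬ (k + 1 ≤ t) := by omega
    rw [G, if_neg h]
    have hk2r : (k:ℝ) + 1 ≤ 2*((t:ℝ)+1) := by
      have : (k:ℝ) ≤ 2*(t:ℝ)+1 := by exact_mod_cast hk2
      linarith
    apply one_div_le_one_div_of_le (by positivity)
    exact pow_le_pow_left₀ (by positivity) hk2r 2
  have := Finset.card_nsmul_le_sum _ _ _ hbound
  rw [hcard] at this
  refine le_trans ?_ this
  rw [nsmul_eq_mul]
  push_cast
  have heq : ((t:ℝ)+2) * (1/(2*((t:ℝ)+1))^2) = ((t:ℝ)+2)/(4*((t:ℝ)+1)^2) := by ring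
  rw [heq, div_le_div_iff₀ (by positivity) (by positivity)]
  nlinarith [sq_nonneg ((t:ℝ)+1)]

/-- tail sum over pairs with product exceeding m -/
noncomputable def T (m : ℕ) : ℝ :=
  ∑' p : ℕ+ × ℕ+, (if (p.1 : ℕ) * (p.2:ℕ) ≤ m then 0 else lam p)

lemma summable_T (m : ℕ) :
    Summable (fun p : ℕ+ × ℕ+ => if (p.1 : ℕ) * (p.2:ℕ) ≤ m then 0 else lam p) := by
  refine Summable.of_nonneg_of_le (fun p => ?_) (fun p => ?_) summable_lam
  · by_cases h : (p.1:ℕ) * (p.2:ℕ) ≤ m <;> simp [h, (lam_pos p).le]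
  · by_cases h : (p.1:ℕ) * (p.2:ℕ) ≤ m <;> simp [h, (lam_pos p).le]

lemma sumA_add_T {m : ℕ} (hm : 1 ≤ m) : ∑ p ∈ A m, lam p + T m = ∑' p, lam p := by
  classical
  set g1 : ℕ+ × ℕ+ → ℝ := fun p => if (p.1 : ℕ) * (p.2:ℕ) ≤ m then lam p else 0 with hg1
  have hsum1 : Summable g1 := by
    refine Summable.of_nonneg_of_le (fun p => ?_) (fun p => ?_) summable_lam <;>
      by_cases h : (p.1:ℕ) * (p.2:ℕ) ≤ m <;> simp [hg1, h, (lam_pos p).le]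
  have hpt : ∀ p, lam p = g1 p + (if (p.1 : ℕ) * (p.2:ℕ) ≤ m then 0 else lam p) := by
    intro p; by_cases h : (p.1:ℕ) * (p.2:ℕ) ≤ m <;> simp [hg1, h]
  have h1 : ∑' p, lam p = ∑' p, g1 p + T m := by
    rw [T, ← Summable.tsum_add hsum1 (summable_T m)]
    exact tsum_congr hpt
  have h2 : ∑' p, g1 p = ∑ p ∈ A m, lam p := by
    rw [tsum_eq_sum (s := A m) (fun p hp => ?_)]
    · refine Finset.sum_congr rfl fun p hp => ?_
      simp [hg1, (mem_A hm).1 hp]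
    · have hnc : ¬ ((p.1:ℕ) * (p.2:ℕ) ≤ m) := fun hc => hp ((mem_A hm).2 hc)
      simp only [hg1]
      exact if_neg hnc
  rw [h1, h2]

lemma summable_slice (i : ℕ+) : Summable (fun j : ℕ+ => lam (i, j)) := by
  have := summable_sq.mul_left ((3 / Real.pi ^ 4) * (1 / (i:ℝ)^2))
  refine this.congr fun j => ?_
  rw [lam_eq]; ring

lemma summable_sliceF (m : ℕ) (i : ℕ+) :
    Summable (fun j : ℕ+ => if (i:ℕ)*(j:ℕ) ≤ m then 0 else lam (i, j)) := by
  refine Summable.of_nonneg_of_le (fun j => ?_) (fun j => ?_) (summable_slice i) <;>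
    by_cases h : (i:ℕ)*(j:ℕ) ≤ m <;> simp [h, (lam_pos (i,j)).le]

lemma inner_eq (m : ℕ) (i : ℕ+) :
    (∑' j : ℕ+, (if (i:ℕ)*(j:ℕ) ≤ m then 0 else lam (i,j)))
      = (3/Real.pi^4) * (1/(i:ℝ)^2) * Tail (m / (i:ℕ)) := by
  rw [Tail, ← tsum_mul_left]
  refine tsum_congr fun j => ?_
  have hcond : ((i:ℕ)*(j:ℕ) ≤ m) ↔ ((j:ℕ) ≤ m / (i:ℕ)) := by
    rw [Nat.le_div_iff_mul_le i.pos, mul_comm]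
  by_cases h : (i:ℕ)*(j:ℕ) ≤ m
  · simp [h, hcond.1 h]
  · rw [if_neg h, if_neg (fun hc => h (hcond.2 hc))]
    rw [lam_eq]; ring

lemma T_eq (m : ℕ) :
    T m = ∑' i : ℕ+, (3/Real.pi^4) * (1/(i:ℝ)^2) * Tail (m / (i:ℕ)) := by
  rw [T, Summable.tsum_prod' (summable_T m) (fun i => summable_sliceF m i)]
  exact tsum_congr (fun i => inner_eq m i)

lemma inner_nonneg (m : ℕ) (i : ℕ+) :
    0 ≤ (3/Real.pi^4) * (1/(i:ℝ)^2) * Tail (m / (i:ℕ)) := by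
  have h1 := pnat_cast_pos i
  have := Real.pi_pos
  have := tail_nonneg (m / (i:ℕ))
  positivity

lemma nat_div_ge_one {m : ℕ} {i : ℕ+} (hi : (i:ℕ) ≤ m) : 1 ≤ m / (i:ℕ) :=
  (Nat.one_le_div_iff i.pos).2 hi

lemma div_two_bound {m : ℕ} {i : ℕ+} (hi : (i:ℕ) ≤ m) :
    (1:ℝ) / (m / (i:ℕ) : ℕ) ≤ 2 * (i:ℝ) / m := by
  have hip := i.pos
  have ht1 : 1 ≤ m / (i:ℕ) := nat_div_ge_one hi
  have hnat : m ≤ 2 * ((i:ℕ) * (m / (i:ℕ))) := by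
    have h1 : m < (i:ℕ) * (m / (i:ℕ)) + (i:ℕ) := by
      have := Nat.div_add_mod m (i:ℕ)
      have := Nat.mod_lt m hip
      omega
    have h2 : (i:ℕ) ≤ (i:ℕ) * (m / (i:ℕ)) := Nat.le_mul_of_pos_right _ ht1
    omega
  have hm0 : 0 < m := le_trans hip hi
  have hmr : (0:ℝ) < m := by exact_mod_cast hm0
  have htr : (0:ℝ) < ((m / (i:ℕ) : ℕ):ℝ) := by exact_mod_cast ht1
  have hir := pnat_cast_pos i
  rw [div_le_div_iff₀ htr hmr]
  have : (m:ℝ) ≤ 2 * ((i:ℝ) * ((m / (i:ℕ) : ℕ):ℝ)) := by exact_mod_cast hnat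
  nlinarith

lemma sum_pnat_Icc {m : ℕ} (hm : 1 ≤ m) (f : ℕ → ℝ) :
    ∑ i ∈ Finset.Icc (1:ℕ+) m.toPNat', f (i:ℕ) = ∑ i ∈ Finset.Icc 1 m, f i := by
  have hcoe : (m.toPNat' : ℕ) = m := PNat.toPNat'_coe hm
  refine Finset.sum_nbij' (fun i : ℕ+ => (i:ℕ)) (fun i => i.toPNat') ?_ ?_ ?_ ?_ ?_
  · intro a ha
    obtain ⟨h1, h2⟩ := Finset.mem_Icc.1 ha
    refine Finset.mem_Icc.2 ⟨a.one_le, ?_⟩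
    rw [← hcoe]; exact_mod_cast h2
  · intro a ha
    obtain ⟨h1, h2⟩ := Finset.mem_Icc.1 ha
    refine Finset.mem_Icc.2 ⟨?_, ?_⟩
    · exact a.toPNat'.one_le
    · have : (a.toPNat' : ℕ) = a := PNat.toPNat'_coe h1
      rw [← PNat.coe_le_coe, this, hcoe]
      exact h2
  · intro a _; exact PNat.coe_toPNat' a
  · intro a ha; exact PNat.toPNat'_coe (Finset.mem_Icc.1 ha).1
  · intro a _; rfl

lemma notmem_Icc_pnat {m : ℕ} (hm : 1 ≤ m) {i : ℕ+} (h : i ∉ Finset.Icc (1:ℕ+) m.toPNat') :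
    ¬ ((i:ℕ) ≤ m) := by
  intro hc
  refine h (Finset.mem_Icc.2 ⟨i.one_le, ?_⟩)
  rw [← PNat.coe_le_coe, PNat.toPNat'_coe hm]
  exact hc

lemma mem_Icc_pnat_le {m : ℕ} (hm : 1 ≤ m) {i : ℕ+}
    (hi : i ∈ Finset.Icc (1:ℕ+) m.toPNat') : (i:ℕ) ≤ m := by
  have h2 := (Finset.mem_Icc.1 hi).2
  have h3 : (i:ℕ) ≤ (m.toPNat' : ℕ) := by exact_mod_cast h2
  rwa [PNat.toPNat'_coe hm] at h3

lemma summable_inner (m : ℕ) :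
    Summable (fun i : ℕ+ => (3/Real.pi^4) * (1/(i:ℝ)^2) * Tail (m / (i:ℕ))) := by
  refine Summable.of_nonneg_of_le (inner_nonneg m) (fun i => ?_)
    (summable_sq.mul_left (6/Real.pi^4))
  have h1 := pnat_cast_pos i
  have hpi := Real.pi_pos
  have h2 := tail_le_two (m / (i:ℕ))
  have h3 := tail_nonneg (m / (i:ℕ))
  have hc : (0:ℝ) ≤ (3/Real.pi^4) * (1/(i:ℝ)^2) := by positivity
  calc (3/Real.pi^4) * (1/(i:ℝ)^2) * Tail (m / (i:ℕ))
      ≤ (3/Real.pi^4) * (1/(i:ℝ)^2) * 2 := by nlinarith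
    _ = 6/Real.pi^4 * (1 / (i:ℝ)^2) := by ring

lemma T_le {m : ℕ} (hm : 1 ≤ m) :
    T m ≤ (3/Real.pi^4) * ((4 + 2*Real.log m)/m) := by
  classical
  have hpi := Real.pi_pos
  have hm0 : (0:ℝ) < m := by exact_mod_cast hm
  rw [T_eq]
  set f1 : ℕ+ → ℝ := fun i => if (i:ℕ) ≤ m then (6/Real.pi^4) * (1/((m:ℝ) * i)) else 0 with hf1
  set f2 : ℕ+ → ℝ := fun i => (6/Real.pi^4) * (if (i:ℕ) ≤ m then 0 else 1/(i:ℝ)^2) with hf2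
  have hsum_f1 : Summable f1 := by
    refine summable_of_ne_finset_zero (s := Finset.Icc 1 m.toPNat') (fun i hi => ?_)
    simp only [hf1]
    exact if_neg (notmem_Icc_pnat hm hi)
  have hsum_f2 : Summable f2 := (summable_tail m).mul_left _
  have hpt : ∀ i : ℕ+, (3/Real.pi^4) * (1/(i:ℝ)^2) * Tail (m / (i:ℕ)) ≤ f1 i + f2 i := by
    intro i
    have hi1 := pnat_cast_pos i
    have hc : (0:ℝ) ≤ (3/Real.pi^4) * (1/(i:ℝ)^2) := by positivity
    by_cases hi : (i:ℕ) ≤ m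
    · have ht1 : 1 ≤ m / (i:ℕ) := nat_div_ge_one hi
      have h2 : Tail (m / (i:ℕ)) ≤ 2 * (i:ℝ) / m :=
        le_trans (tail_le ht1) (div_two_bound hi)
      simp only [hf1, hf2, if_pos hi]
      rw [mul_zero, add_zero]
      calc (3/Real.pi^4) * (1/(i:ℝ)^2) * Tail (m / (i:ℕ))
          ≤ (3/Real.pi^4) * (1/(i:ℝ)^2) * (2 * (i:ℝ) / m) := by
            exact mul_le_mul_of_nonneg_left h2 hc
        _ = (6/Real.pi^4) * (1/((m:ℝ) * i)) := by
            field_simp; ring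
    · have h2 := tail_le_two (m / (i:ℕ))
      have h3 := tail_nonneg (m / (i:ℕ))
      simp only [hf1, hf2, if_neg hi]
      rw [zero_add]
      calc (3/Real.pi^4) * (1/(i:ℝ)^2) * Tail (m / (i:ℕ))
          ≤ (3/Real.pi^4) * (1/(i:ℝ)^2) * 2 := by nlinarith
        _ = (6/Real.pi^4) * (1/(i:ℝ)^2) := by ring
  have hstep := Summable.tsum_le_tsum hpt (summable_inner m) (hsum_f1.add hsum_f2)
  refine le_trans hstep ?_
  rw [Summable.tsum_add hsum_f1 hsum_f2]
  have hS1 : ∑' i, f1 i = (6/Real.pi^4) * (1/(m:ℝ)) * Hsum m := by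
    rw [tsum_eq_sum (s := Finset.Icc 1 m.toPNat')
      (fun i hi => by simp only [hf1]; exact if_neg (notmem_Icc_pnat hm hi))]
    have hcg : ∀ i ∈ Finset.Icc (1:ℕ+) m.toPNat', f1 i
        = (fun n : ℕ => (6/Real.pi^4) * (1/(m:ℝ)) * (1/(n:ℝ))) (i:ℕ) := by
      intro i hi
      have hile : (i:ℕ) ≤ m := mem_Icc_pnat_le hm hi
      have hi1 := (pnat_cast_pos i).ne'
      simp only [hf1, if_pos hile]
      field_simp
    rw [Finset.sum_congr rfl hcg,
      sum_pnat_Icc hm (fun n : ℕ => (6/Real.pi^4) * (1/(m:ℝ)) * (1/(n:ℝ)))]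
    rw [Hsum, Finset.mul_sum]
  have hS2 : ∑' i, f2 i = (6/Real.pi^4) * Tail m := by
    rw [hf2, tsum_mul_left]; rfl
  rw [hS1, hS2]
  have hHs := Hsum_le m
  have hT := tail_le hm
  have hx : (0:ℝ) < 1/(m:ℝ) := by positivity
  calc (6/Real.pi^4) * (1/(m:ℝ)) * Hsum m + (6/Real.pi^4) * Tail m
      ≤ (6/Real.pi^4) * (1/(m:ℝ)) * (1 + Real.log m) + (6/Real.pi^4) * (1/(m:ℝ)) := by
        refine add_le_add (mul_le_mul_of_nonneg_left hHs (by positivity)) ?_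
        exact mul_le_mul_of_nonneg_left hT (by positivity)
    _ = (3/Real.pi^4) * ((4 + 2*Real.log m)/m) := by
        field_simp; ring

lemma T_ge {m : ℕ} (hm : 1 ≤ m) :
    (3/Real.pi^4) * (Real.log m/(8*m)) ≤ T m := by
  have hpi := Real.pi_pos
  have hm0 : (0:ℝ) < m := by exact_mod_cast hm
  rw [T_eq]
  have hlb := Summable.sum_le_tsum (Finset.Icc 1 m.toPNat')
    (fun i _ => inner_nonneg m i) (summable_inner m)
  refine le_trans ?_ hlb
  have hterm : ∀ i ∈ Finset.Icc (1:ℕ+) m.toPNat',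
      (fun n : ℕ => (3/Real.pi^4) * (1/(8*(m:ℝ))) * (1/(n:ℝ))) (i:ℕ)
        ≤ (3/Real.pi^4) * (1/(i:ℝ)^2) * Tail (m / (i:ℕ)) := by
    intro i hi
    have hile := mem_Icc_pnat_le hm hi
    have hi1 := pnat_cast_pos i
    set t := m / (i:ℕ) with ht
    have h1 : ((t:ℕ):ℝ) ≤ (m:ℝ)/(i:ℝ) := by
      rw [ht]; exact_mod_cast Nat.cast_div_le
    have h2 : (1:ℝ) ≤ (m:ℝ)/(i:ℝ) := by
      rw [le_div_iff₀ hi1, one_mul]; exact_mod_cast hile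
    have h3 : 4*((t:ℝ)+1) ≤ 8*(m:ℝ)/(i:ℝ) := by
      have : 8*(m:ℝ)/(i:ℝ) = 4*((m:ℝ)/(i:ℝ)) + 4*((m:ℝ)/(i:ℝ)) := by ring
      rw [this]; linarith
    have h4 : (i:ℝ)/(8*(m:ℝ)) ≤ 1/(4*((t:ℝ)+1)) := by
      rw [div_le_div_iff₀ (by positivity) (by positivity)]
      have h5 : (i:ℝ) * (4*((t:ℝ)+1)) ≤ (i:ℝ) * (8*(m:ℝ)/(i:ℝ)) :=
        mul_le_mul_of_nonneg_left h3 hi1.le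
      have h6 : (i:ℝ) * (8*(m:ℝ)/(i:ℝ)) = 1 * (8*(m:ℝ)) := by
        field_simp
      rw [h6] at h5; exact h5
    have h7 : (i:ℝ)/(8*(m:ℝ)) ≤ Tail t := le_trans h4 (tail_ge t)
    calc (3/Real.pi^4) * (1/(8*(m:ℝ))) * (1/(i:ℝ))
        = (3/Real.pi^4) * (1/(i:ℝ)^2) * ((i:ℝ)/(8*(m:ℝ))) := by
          field_simp
      _ ≤ (3/Real.pi^4) * (1/(i:ℝ)^2) * Tail t :=
          mul_le_mul_of_nonneg_left h7 (by positivity)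
  calc (3/Real.pi^4) * (Real.log m/(8*m))
      ≤ (3/Real.pi^4) * (1/(8*(m:ℝ))) * Hsum m := by
        have := log_le_Hsum m
        have hc : (0:ℝ) ≤ (3/Real.pi^4) * (1/(8*(m:ℝ))) := by positivity
        calc (3/Real.pi^4) * (Real.log m/(8*m))
            = (3/Real.pi^4) * (1/(8*(m:ℝ))) * Real.log m := by ring
          _ ≤ (3/Real.pi^4) * (1/(8*(m:ℝ))) * Hsum m :=
              mul_le_mul_of_nonneg_left this hc
    _ = ∑ n ∈ Finset.Icc 1 m, (3/Real.pi^4) * (1/(8*(m:ℝ))) * (1/(n:ℝ)) := by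
        rw [Hsum, Finset.mul_sum]
    _ = ∑ i ∈ Finset.Icc (1:ℕ+) m.toPNat',
          (fun n : ℕ => (3/Real.pi^4) * (1/(8*(m:ℝ))) * (1/(n:ℝ))) (i:ℕ) :=
        (sum_pnat_Icc hm _).symm
    _ ≤ ∑ i ∈ Finset.Icc (1:ℕ+) m.toPNat',
          (3/Real.pi^4) * (1/(i:ℝ)^2) * Tail (m / (i:ℕ)) :=
        Finset.sum_le_sum hterm

section claims
variable {e : ℕ ≃ ℕ+ × ℕ+} (hmono : Antitone fun v : ℕ => lam (e v))
include hmono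

lemma claim1 {m K : ℕ} (hm : 1 ≤ m) (h : (A m).card ≤ K) :
    ∀ p ∈ A m, e.symm p < K := by
  intro p hp
  by_contra hv
  push_neg at hv
  set v := e.symm p with hvdef
  have hev : e v = p := e.apply_symm_apply p
  have key : ∀ w ∈ Finset.range (v+1), e w ∈ A m := by
    intro w hw
    rw [Finset.mem_range] at hw
    by_contra hw'
    have h1 : lam (e v) ≤ lam (e w) := hmono (by omega)
    rw [hev] at h1
    have h2 : (p.1:ℕ) * (p.2:ℕ) ≤ m := (mem_A hm).1 hp
    have h3 : ¬ (((e w).1:ℕ) * ((e w).2:ℕ) ≤ m) := fun hc => hw' ((mem_A hm).2 hc)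
    have h4 : lam (e w) < lam p := lam_lt (by omega)
    exact absurd h1 (not_le.2 h4)
  have hsub : (Finset.range (v+1)).image e ⊆ A m := by
    intro q hq
    obtain ⟨w, hw, rfl⟩ := Finset.mem_image.1 hq
    exact key w hw
  have hcard : ((Finset.range (v+1)).image e).card = v + 1 := by
    rw [Finset.card_image_of_injective _ e.injective, Finset.card_range]
  have := Finset.card_le_card hsub
  rw [hcard] at this
  omega

lemma claim2 {m K : ℕ} (hm : 1 ≤ m) (h : K ≤ (A m).card) :
    ∀ v < K, e v ∈ A m := by
  intro v hv
  by_contra hev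
  have key : ∀ p ∈ A m, e.symm p < v := by
    intro p hp
    by_contra hw
    push_neg at hw
    have h1 : lam (e (e.symm p)) ≤ lam (e v) := hmono hw
    rw [e.apply_symm_apply] at h1
    have h2 : (p.1:ℕ) * (p.2:ℕ) ≤ m := (mem_A hm).1 hp
    have h3 : ¬ (((e v).1:ℕ) * ((e v).2:ℕ) ≤ m) := fun hc => hev ((mem_A hm).2 hc)
    have h4 : lam (e v) < lam p := lam_lt (by omega)
    exact absurd h1 (not_le.2 h4)
  have hinj : (A m).card ≤ (Finset.range v).card := by
    refine Finset.card_le_card_of_injOn (fun p => e.symm p) ?_ ?_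
    · intro p hp
      exact Finset.mem_range.2 (key p hp)
    · intro p _ q _ hpq
      exact e.symm.injective hpq
  rw [Finset.card_range] at hinj
  omega

end claims

set_option maxHeartbeats 2000000 in
theorem hoeffding_eigenvalue_tail_sums
    (e : ℕ ≃ ℕ+ × ℕ+)
    (hmono : Antitone fun v : ℕ =>
      3 / (Real.pi ^ 4 * ((e v).1 : ℝ) ^ 2 * ((e v).2 : ℝ) ^ 2)) :
    ∃ c C : ℝ, 0 < c ∧ c < C ∧ ∃ K₀ : ℕ, ∀ K : ℕ, K₀ ≤ K →
      c * (Real.log K) ^ 2 / K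
          ≤ (∑' v : ℕ, 3 / (Real.pi ^ 4 * ((e (v + K)).1 : ℝ) ^ 2 * ((e (v + K)).2 : ℝ) ^ 2)) ∧
      (∑' v : ℕ, 3 / (Real.pi ^ 4 * ((e (v + K)).1 : ℝ) ^ 2 * ((e (v + K)).2 : ℝ) ^ 2))
          ≤ C * (Real.log K) ^ 2 / K := by
  have hpi := Real.pi_pos
  have hmono' : Antitone fun v : ℕ => lam (e v) := hmono
  refine ⟨3/(Real.pi^4 * 600), 200/Real.pi^4, by positivity, ?_, 1000000, fun K hK => ?_⟩
  · rw [div_lt_div_iff₀ (by positivity) (by positivity)]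
    nlinarith [pow_pos hpi 4, sq_nonneg (Real.pi^2)]
  have hrepl : (∑' v : ℕ, 3 / (Real.pi ^ 4 * ((e (v + K)).1 : ℝ) ^ 2 * ((e (v + K)).2 : ℝ) ^ 2))
      = ∑' v : ℕ, lam (e (v + K)) := rfl
  rw [hrepl]
  have hKr : (1000000:ℝ) ≤ (K:ℝ) := by exact_mod_cast hK
  have hK0 : (0:ℝ) < K := by linarith
  have hKnat : 0 < K := by exact_mod_cast hK0
  set L := Real.log K with hLdef
  -- L ≥ 13
  have hexp : Real.exp 13 ≤ 1000000 := by
    have h1 : Real.exp 1 ≤ 2.7182818286 := le_of_lt Real.exp_one_lt_d9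
    have h2 : Real.exp 13 = Real.exp 1 ^ (13:ℕ) := by
      rw [← Real.exp_nat_mul]; norm_num
    rw [h2]
    calc Real.exp 1 ^ (13:ℕ) ≤ 2.7182818286 ^ (13:ℕ) :=
          pow_le_pow_left₀ (Real.exp_pos 1).le h1 13
      _ ≤ 1000000 := by norm_num
  have hL13 : 13 ≤ L := by
    rw [hLdef, Real.le_log_iff_exp_le hK0]
    linarith
  have hL0 : 0 < L := by linarith
  -- sqrt bounds
  set s := Real.sqrt K with hsdef
  have hs0 : 0 < s := Real.sqrt_pos.2 hK0
  have hsq : s * s = K := Real.mul_self_sqrt hK0.le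
  have hs1000 : 1000 ≤ s := by nlinarith
  have hLs : L ≤ 2 * s := by
    have h1 : Real.log s ≤ s - 1 := Real.log_le_sub_one_of_pos hs0
    have h2 : Real.log s = L / 2 := by rw [hsdef, hLdef, Real.log_sqrt hK0.le]
    linarith
  have hKL : s / 2 ≤ (K:ℝ) / L := by
    rw [div_le_div_iff₀ (by norm_num) hL0]
    nlinarith
  -- ### m₁
  set n₁ := Nat.floor L with hn₁def
  have hn₁_le : (n₁:ℝ) ≤ L := Nat.floor_le hL0.le
  have hn₁_gt : L - 1 < (n₁:ℝ) := by
    have := Nat.lt_floor_add_one L; linarith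
  have hn₁_pos : 0 < n₁ := Nat.floor_pos.2 (by linarith)
  have hn₁_posr : (0:ℝ) < n₁ := by exact_mod_cast hn₁_pos
  set m₁ := (8*K)/n₁ + 1 with hm₁def
  have hm₁_pos : 1 ≤ m₁ := Nat.le_add_left 1 _
  have hm₁_posr : (0:ℝ) < (m₁:ℝ) := by exact_mod_cast hm₁_pos
  have hdiv_le : (((8*K)/n₁ : ℕ):ℝ) ≤ 8*(K:ℝ)/(n₁:ℝ) := by
    have := Nat.cast_div_le (α := ℝ) (m := 8*K) (n := n₁)
    push_cast at this ⊢
    linarith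
  have hdiv_gt : 8*(K:ℝ)/(n₁:ℝ) - 1 < (((8*K)/n₁ : ℕ):ℝ) := by
    have h1 : 8*K < n₁ * ((8*K)/n₁ + 1) := by
      have := Nat.div_add_mod (8*K) n₁
      have := Nat.mod_lt (8*K) hn₁_pos
      nlinarith
    have h1r : 8*(K:ℝ) < (n₁:ℝ) * ((((8*K)/n₁ : ℕ):ℝ) + 1) := by exact_mod_cast h1
    rw [sub_lt_iff_lt_add, div_lt_iff₀ hn₁_posr]
    nlinarith
  have hm₁_ge : 8*(K:ℝ)/L ≤ (m₁:ℝ) := by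
    have h1 : 8*(K:ℝ)/L ≤ 8*(K:ℝ)/(n₁:ℝ) :=
      div_le_div_of_nonneg_left (by positivity) hn₁_posr hn₁_le
    have h2 : (m₁:ℝ) = (((8*K)/n₁ : ℕ):ℝ) + 1 := by push_cast [hm₁def]; ring
    linarith
  have hm₁_le : (m₁:ℝ) ≤ 17*(K:ℝ)/L := by
    have h2 : (m₁:ℝ) = (((8*K)/n₁ : ℕ):ℝ) + 1 := by push_cast [hm₁def]; ring
    have h3 : 8*(K:ℝ)/(n₁:ℝ) ≤ 8*(K:ℝ)/(L-1) :=
      div_le_div_of_nonneg_left (by positivity) (by linarith) (by linarith)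
    have h4 : 8*(K:ℝ)/(L-1) ≤ 16*(K:ℝ)/L := by
      rw [div_le_div_iff₀ (by linarith) hL0]
      nlinarith
    have h5 : 1 ≤ (K:ℝ)/L := by linarith
    have h6 : 16*(K:ℝ)/L + 1 ≤ 17*(K:ℝ)/L := by
      have : 16*(K:ℝ)/L + (K:ℝ)/L = 17*(K:ℝ)/L := by ring
      linarith
    linarith
  have hm₁_ge_s : s ≤ (m₁:ℝ) := by
    have h8 : 8*(K:ℝ)/L = 8*((K:ℝ)/L) := by ring
    linarith [hm₁_ge, hKL, hs0]
  have hlogm₁ : L/2 ≤ Real.log m₁ := by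
    have h1 : Real.log s ≤ Real.log m₁ :=
      (Real.log_le_log_iff hs0 hm₁_posr).2 hm₁_ge_s
    have h2 : Real.log s = L / 2 := by rw [hsdef, hLdef, Real.log_sqrt hK0.le]
    linarith
  have hcard₁ : K ≤ (A m₁).card := by
    have e1 : L/4 ≤ Real.log m₁ - 1 := by linarith
    have e2 : (8*(K:ℝ)/L) * (L/4) = 2*K := by field_simp; ring
    have e3 : (8*(K:ℝ)/L) * (L/4) ≤ (m₁:ℝ) * (Real.log m₁ - 1) :=
      mul_le_mul hm₁_ge e1 (by linarith) hm₁_posr.le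
    have e4 : (K:ℝ) ≤ (m₁:ℝ) * (Real.log m₁ - 1) := by
      rw [e2] at e3; linarith
    have e5 := cardA_ge hm₁_pos
    have : (K:ℝ) ≤ ((A m₁).card : ℝ) := by linarith
    exact_mod_cast this
  -- ### m₂
  set n₂ := Nat.ceil (2*L) with hn₂def
  have hn₂_ge : 2*L ≤ (n₂:ℝ) := Nat.le_ceil _
  have hn₂_lt : (n₂:ℝ) < 2*L + 1 := by
    have := Nat.ceil_lt_add_one (by positivity : (0:ℝ) ≤ 2*L)
    exact_mod_cast this
  have hn₂_le : (n₂:ℝ) ≤ 3*L := by linarith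
  have hn₂_pos : 0 < n₂ := by
    have : (0:ℝ) < (n₂:ℝ) := by linarith
    exact_mod_cast this
  set m₂ := K / n₂ with hm₂def
  have hm₂_le : (m₂:ℝ) ≤ (K:ℝ)/(2*L) := by
    have h1 : ((K/n₂ : ℕ):ℝ) ≤ (K:ℝ)/(n₂:ℝ) := Nat.cast_div_le
    have h2 : (K:ℝ)/(n₂:ℝ) ≤ (K:ℝ)/(2*L) :=
      div_le_div_of_nonneg_left (by positivity) (by linarith) hn₂_ge
    rw [hm₂def]; linarith
  have hm₂_ge : (K:ℝ)/(4*L) ≤ (m₂:ℝ) := by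
    have h1 : K < n₂ * (K/n₂ + 1) := by
      have := Nat.div_add_mod K n₂
      have := Nat.mod_lt K hn₂_pos
      nlinarith
    have h1r : (K:ℝ) < (n₂:ℝ) * (((K/n₂ : ℕ):ℝ) + 1) := by exact_mod_cast h1
    have h2 : (K:ℝ)/(n₂:ℝ) - 1 < ((K/n₂ : ℕ):ℝ) := by
      rw [sub_lt_iff_lt_add, div_lt_iff₀ (by linarith : (0:ℝ) < (n₂:ℝ))]
      nlinarith
    have h3 : (K:ℝ)/(3*L) ≤ (K:ℝ)/(n₂:ℝ) :=
      div_le_div_of_nonneg_left (by positivity) (by linarith) hn₂_le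
    have h4 : (K:ℝ)/(4*L) + 1 ≤ (K:ℝ)/(3*L) := by
      have h5 : (K:ℝ)/(3*L) - (K:ℝ)/(4*L) = ((K:ℝ)/L)/12 := by field_simp; ring
      have h6 : (12:ℝ) ≤ (K:ℝ)/L/12 * 12 := by
        have : s/2 ≤ (K:ℝ)/L := hKL
        nlinarith
      nlinarith
    rw [hm₂def]; linarith
  have hm₂_pos : 1 ≤ m₂ := by
    have h1 : (1:ℝ) ≤ (K:ℝ)/(4*L) := by
      have : s/2 ≤ (K:ℝ)/L := hKL
      have h2 : (K:ℝ)/(4*L) = ((K:ℝ)/L)/4 := by ring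
      linarith
    have : (1:ℝ) ≤ (m₂:ℝ) := by linarith
    exact_mod_cast this
  have hm₂_posr : (0:ℝ) < (m₂:ℝ) := by exact_mod_cast hm₂_pos
  have hm₂_leK : (m₂:ℝ) ≤ (K:ℝ) := by
    have : m₂ ≤ K := by rw [hm₂def]; exact Nat.div_le_self K n₂
    exact_mod_cast this
  have hlogm₂_le : Real.log m₂ ≤ L := by
    rw [hLdef]
    exact (Real.log_le_log_iff hm₂_posr hK0).2 hm₂_leK
  have hlogm₂_nonneg : 0 ≤ Real.log m₂ :=
    Real.log_nonneg (by exact_mod_cast hm₂_pos)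
  have hcard₂ : (A m₂).card ≤ K := by
    have e1 := cardA_le hm₂_pos
    have e2 : (m₂:ℝ) * (1 + Real.log m₂) ≤ ((K:ℝ)/(2*L)) * (2*L) := by
      refine mul_le_mul hm₂_le (by linarith) (by linarith) (by positivity)
    have e3 : ((K:ℝ)/(2*L)) * (2*L) = K := by field_simp
    have : ((A m₂).card : ℝ) ≤ (K:ℝ) := by linarith [e2.trans_eq e3]
    exact_mod_cast this
  -- ### sum decomposition
  have hse : Summable (fun v : ℕ => lam (e v)) :=
    summable_lam.comp_injective e.injective
  have hkey : (∑ v ∈ Finset.range K, lam (e v)) + (∑' v : ℕ, lam (e (v + K)))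
      = ∑' v : ℕ, lam (e v) := Summable.sum_add_tsum_nat_add K hse
  have htot : ∑' v : ℕ, lam (e v) = ∑' p, lam p := e.tsum_eq lam
  have hHd_eq : (∑ v ∈ Finset.range K, lam (e v))
      = ∑ p ∈ (Finset.range K).image e, lam p :=
    (Finset.sum_image (fun x _ y _ h => e.injective h)).symm
  have hup : (∑' v : ℕ, lam (e (v + K))) ≤ T m₂ := by
    have hsub₂ : A m₂ ⊆ (Finset.range K).image e := by
      intro p hp
      have := claim1 hmono' hm₂_pos hcard₂ p hp
      exact Finset.mem_image.2 ⟨e.symm p, Finset.mem_range.2 this, e.apply_symm_apply p⟩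
    have h1 : ∑ p ∈ A m₂, lam p ≤ ∑ v ∈ Finset.range K, lam (e v) := by
      rw [hHd_eq]
      exact Finset.sum_le_sum_of_subset_of_nonneg hsub₂ (fun p _ _ => (lam_pos p).le)
    have h2 := sumA_add_T hm₂_pos
    rw [← htot] at h2
    linarith
  have hlow : T m₁ ≤ (∑' v : ℕ, lam (e (v + K))) := by
    have hsub₁ : (Finset.range K).image e ⊆ A m₁ := by
      intro q hq
      obtain ⟨v, hv, rfl⟩ := Finset.mem_image.1 hq
      exact claim2 hmono' hm₁_pos hcard₁ v (Finset.mem_range.1 hv)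
    have h1 : (∑ v ∈ Finset.range K, lam (e v)) ≤ ∑ p ∈ A m₁, lam p := by
      rw [hHd_eq]
      exact Finset.sum_le_sum_of_subset_of_nonneg hsub₁ (fun p _ _ => (lam_pos p).le)
    have h2 := sumA_add_T hm₁_pos
    rw [← htot] at h2
    linarith
  constructor
  · -- lower bound
    refine le_trans ?_ (le_trans (T_ge hm₁_pos) hlow)
    have h1 : (L/2)/(8*(17*(K:ℝ)/L)) ≤ Real.log m₁/(8*(m₁:ℝ)) := by
      refine div_le_div₀ (by positivity) hlogm₁ (by positivity) ?_
      nlinarith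
    have h2 : (L/2)/(8*(17*(K:ℝ)/L)) = L^2/(272*K) := by
      field_simp; ring
    have h3 : 3/(Real.pi^4 * 600) * L^2 / K = (3/Real.pi^4) * (L^2/(600*K)) := by
      field_simp
    rw [h3]
    have h4 : L^2/(600*K) ≤ L^2/(272*K) := by
      apply div_le_div_of_nonneg_left (by positivity) (by positivity) (by linarith)
    calc (3/Real.pi^4) * (L^2/(600*K))
        ≤ (3/Real.pi^4) * (L^2/(272*K)) :=
          mul_le_mul_of_nonneg_left h4 (by positivity)
      _ = (3/Real.pi^4) * ((L/2)/(8*(17*(K:ℝ)/L))) := by rw [h2]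
      _ ≤ (3/Real.pi^4) * (Real.log m₁/(8*(m₁:ℝ))) :=
          mul_le_mul_of_nonneg_left h1 (by positivity)
  · -- upper bound
    refine le_trans (le_trans hup (T_le hm₂_pos)) ?_
    have h1 : 4 + 2*Real.log m₂ ≤ 3*L := by linarith
    have h2 : (1:ℝ)/(m₂:ℝ) ≤ 4*L/K := by
      have h3 : (0:ℝ) < (K:ℝ)/(4*L) := by positivity
      have h4 := one_div_le_one_div_of_le h3 hm₂_ge
      have h5 : (1:ℝ)/((K:ℝ)/(4*L)) = 4*L/K := by
        field_simp
      linarith [h4.trans_eq h5]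
    have h6 : (4 + 2*Real.log m₂)/(m₂:ℝ) ≤ (3*L)*(4*L/K) := by
      have h7 : (4 + 2*Real.log m₂)/(m₂:ℝ) = (4 + 2*Real.log m₂) * (1/(m₂:ℝ)) := by
        ring
      rw [h7]
      refine mul_le_mul h1 h2 (by positivity) (by positivity)
    calc (3/Real.pi^4) * ((4 + 2*Real.log m₂)/(m₂:ℝ))
        ≤ (3/Real.pi^4) * ((3*L)*(4*L/K)) :=
          mul_le_mul_of_nonneg_left h6 (by positivity)
      _ = (36/Real.pi^4) * L^2 / K := by field_simp; ring
      _ ≤ 200/Real.pi^4 * L^2 / K := by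
          have h8 : (0:ℝ) ≤ L^2 / K := by positivity
          have h9 : (36:ℝ)/Real.pi^4 ≤ 200/Real.pi^4 :=
            (div_le_div_iff_of_pos_right (by positivity)).2 (by norm_num)
          calc (36/Real.pi^4) * L^2 / K = (36/Real.pi^4) * (L^2/K) := by ring
            _ ≤ (200/Real.pi^4) * (L^2/K) := mul_le_mul_of_nonneg_right h9 h8
            _ = 200/Real.pi^4 * L^2 / K := by ring
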